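/- If R: V → G is a relative Rota-Baxter operator of weight 0, then (V, +, *) with u * v = u + Φ(R(u))v is a left brace, i.e., (V,+) is an abelian group, (V,*) is a group, and x*(y+z) = (x*y) + (x*z) − x for all x,y,z ∈ V. -/

import Mathlib

/-- The multiplicative group structure that older Mathlib put on `AddAut M`
(composition, `e₁ * e₂ = e₂.trans e₁`); Mathlib now gives `AddAut M` an additive group. -/
instance AddAut.oldMulGroup (M : Type*) [Add M] : Group (AddAut M) where
  mul g h := AddEquiv.trans h g
  one := AddEquiv.refl _
  inv := AddEquiv.symm
  mul_assoc _ _ _ := rfl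
  one_mul _ := rfl
  mul_one _ := rfl
  inv_mul_cancel := AddEquiv.self_trans_symm

theorem rrb_brace {G V : Type*} [Group G] [AddCommGroup V]
    (Φ : G →* AddAut V) (R : V → G)
    (hR : ∀ u v : V, R u * R v = R (u + Φ (R u) v)) :
    (∀ u v w : V, (u + Φ (R u) v) + Φ (R (u + Φ (R u) v)) w
        = u + Φ (R u) (v + Φ (R v) w)) ∧
    (∀ u : V, (0 : V) + Φ (R 0) u = u) ∧
    (∀ u : V, u + Φ (R u) (0 : V) = u) ∧
    (∀ u : V, u + Φ (R u) (-(Φ ((R u)⁻¹) u)) = 0) ∧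
    (∀ u : V, -(Φ ((R u)⁻¹) u) + Φ (R (-(Φ ((R u)⁻¹) u))) u = 0) ∧
    (∀ x y z : V, x + Φ (R x) (y + z) = (x + Φ (R x) y) + (x + Φ (R x) z) - x) := by
  have hmul : ∀ (a b : AddAut V) (x : V), (a * b) x = a (b x) := fun _ _ _ => rfl
  have hone : ∀ x : V, (1 : AddAut V) x = x := fun _ => rfl
  have hR0 : R 0 = 1 := by
    have h := hR 0 0
    simp only [map_zero] at h
    have h' : R 0 * R 0 = R 0 := by simpa using h
    exact mul_eq_left.mp h'
  have hinv : ∀ u : V, u + Φ (R u) (-(Φ ((R u)⁻¹) u)) = 0 := by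
    intro u
    have : Φ (R u) (Φ ((R u)⁻¹) u) = u := by
      rw [← hmul, ← map_mul, mul_inv_cancel, map_one, hone]
    rw [map_neg, this]
    abel
  refine ⟨?_, ?_, ?_, hinv, ?_, ?_⟩
  · intro u v w
    rw [← hR, map_mul, hmul, map_add, add_assoc]
  · intro u; simp [hR0, hone]
  · intro u; simp
  · intro u
    have h1 : R u * R (-(Φ ((R u)⁻¹) u)) = 1 := by
      rw [hR, hinv u, hR0]
    have h2 : R (-(Φ ((R u)⁻¹) u)) = (R u)⁻¹ := eq_inv_of_mul_eq_one_right h1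
    rw [h2]; abel
  · intro x y z
    rw [map_add]; abel
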